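/- In any Poisson H-pseudoalgebra V, the right Leibniz rule holds: [ab ∗ c] = a[b ∗ c] + (-1)^{p(a)p(b)} b[a ∗ c], where for [b ∗ c] = Σ_i (h_i ⊗ l_i) ⊗_H d_i one defines a[b ∗ c] := Σ_i (h_{i(1)} ⊗ l_i) ⊗_H (S(h_{i(2)})a) d_i. -/

import Mathlib

set_option linter.unusedSectionVars false
set_option maxHeartbeats 1600000
set_option synthInstance.maxHeartbeats 400000


open TensorProduct

noncomputable section

variable (F : Type*) [Field F] [CharZero F]
variable (H : Type*) [Ring H] [HopfAlgebra F H]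
variable (V : Type*) [NonUnitalRing V] [Module F V] [Module H V]
  [IsScalarTower F H V] [SMulCommClass F H V]
  [IsScalarTower F V V] [SMulCommClass F V V]

/-- action of `H` on `V` as a bilinear map -/
def hAct : H →ₗ[F] V →ₗ[F] V :=
  LinearMap.mk₂ F (· • ·) (fun h h' v => add_smul h h' v)
    (fun r h v => smul_assoc r h v) (fun h v v' => smul_add h v v')
    (fun r h v => (smul_comm r h v).symm)

/-- the balancing submodule defining `(H ⊗ H) ⊗_H V`, where `H` acts on `H ⊗ H`
on the right via the coproduct. -/
def relSub : Submodule F ((H ⊗[F] H) ⊗[F] V) :=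
  Submodule.span F
    {x | ∃ (w : H ⊗[F] H) (h : H) (v : V),
      x = (w * Coalgebra.comul h) ⊗ₜ[F] v - w ⊗ₜ[F] (h • v)}

/-- `k ⊗ e ↦ e * (S(k) • c)` -/
def rmulAct (c : V) : H →ₗ[F] V →ₗ[F] V :=
  LinearMap.mk₂ F (fun k e => e * (HopfAlgebra.antipode (R := F) k • c))
    (fun k k' e => by simp [map_add, add_smul, mul_add])
    (fun r k e => by simp [map_smul, smul_assoc, mul_smul_comm])
    (fun k e e' => by simp [add_mul])
    (fun r k e => by simp [smul_mul_assoc])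

/-- `k ⊗ b ↦ (S(k) • a) * b` -/
def lmulAct (a : V) : H →ₗ[F] V →ₗ[F] V :=
  LinearMap.mk₂ F (fun k b => (HopfAlgebra.antipode (R := F) k • a) * b)
    (fun k k' b => by simp [map_add, add_smul, add_mul])
    (fun r k b => by simp [map_smul, smul_assoc, smul_mul_assoc])
    (fun k b b' => by simp [mul_add])
    (fun r k b => by simp [mul_smul_comm])

/-- the right product `B ⊗ c ↦ Bc`:
`(f ⊗ g) ⊗ b ↦ (f ⊗ g₍₁₎) ⊗ (b * (S(g₍₂₎) • c))` -/
def Phi (c : V) : (H ⊗[F] H) ⊗[F] V →ₗ[F] (H ⊗[F] H) ⊗[F] V :=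
  (TensorProduct.map LinearMap.id (TensorProduct.lift (rmulAct F H V c)))
    ∘ₗ (TensorProduct.assoc F (H ⊗[F] H) H V).toLinearMap
    ∘ₗ (TensorProduct.map (TensorProduct.assoc F H H H).symm.toLinearMap LinearMap.id)
    ∘ₗ (TensorProduct.map (TensorProduct.map LinearMap.id Coalgebra.comul) LinearMap.id)

/-- the left product `a ⊗ B ↦ aB`:
`(f ⊗ g) ⊗ b ↦ (f₍₁₎ ⊗ g) ⊗ ((S(f₍₂₎) • a) * b)` -/
def PhiL (a : V) : (H ⊗[F] H) ⊗[F] V →ₗ[F] (H ⊗[F] H) ⊗[F] V :=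
  (TensorProduct.map LinearMap.id (TensorProduct.lift (lmulAct F H V a)))
    ∘ₗ (TensorProduct.tensorTensorTensorComm F H H H V).toLinearMap
    ∘ₗ (TensorProduct.assoc F (H ⊗[F] H) H V).toLinearMap
    ∘ₗ (TensorProduct.map (TensorProduct.map Coalgebra.comul LinearMap.id) LinearMap.id)


open Coalgebra HopfAlgebra

section MyAux
variable {F} {H} {V}


noncomputable def lift3 {M : Type*} [AddCommMonoid M] [Module F M]
    (φ : H →ₗ[F] H →ₗ[F] H →ₗ[F] M) : H ⊗[F] (H ⊗[F] H) →ₗ[F] M :=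
  TensorProduct.lift ((TensorProduct.uncurry (RingHom.id F) H H M) ∘ₗ φ)

@[simp] lemma lift3_tmul {M : Type*} [AddCommMonoid M] [Module F M]
    (φ : H →ₗ[F] H →ₗ[F] H →ₗ[F] M) (x y z : H) :
    lift3 φ (x ⊗ₜ (y ⊗ₜ z)) = φ x y z := by
  simp [lift3]

lemma repr_switch {M : Type*} [AddCommMonoid M] [Module F M]
    (φ : H →ₗ[F] H →ₗ[F] H →ₗ[F] M) {a : H} {ι κ₁ κ₂ : Type*} (r : Coalgebra.Repr F a ι)
    (r1 : ∀ i : r.ι, Coalgebra.Repr F (r.left i) κ₁)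
    (r2 : ∀ i : r.ι, Coalgebra.Repr F (r.right i) κ₂) :
    ∑ i ∈ r.index, ∑ k ∈ (r1 i).index, φ ((r1 i).left k) ((r1 i).right k) (r.right i)
      = ∑ i ∈ r.index, ∑ k ∈ (r2 i).index, φ (r.left i) ((r2 i).left k) ((r2 i).right k) := by
  have h2 := congrArg (lift3 φ) (Coalgebra.sum_tmul_tmul_eq r r1 r2)
  simpa [map_sum] using h2

noncomputable def triMul (A B C : H →ₗ[F] H) : H →ₗ[F] H →ₗ[F] H →ₗ[F] H where
  toFun x := LinearMap.mk₂ F (fun y z => A x * (B y * C z))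
    (fun y y' z => by simp [add_mul, mul_add])
    (fun r y z => by simp [smul_mul_assoc, mul_smul_comm])
    (fun y z z' => by simp [mul_add])
    (fun r y z => by simp [smul_mul_assoc, mul_smul_comm])
  map_add' x x' := by
    refine LinearMap.ext fun y => LinearMap.ext fun z => ?_
    simp [add_mul]
  map_smul' r x := by
    refine LinearMap.ext fun y => LinearMap.ext fun z => ?_
    simp [smul_mul_assoc]

@[simp] lemma triMul_apply (A B C : H →ₗ[F] H) (x y z : H) :
    triMul A B C x y z = A x * (B y * C z) := rfl

lemma sum_counit_smul_left {a : H} {ι : Type*} (r : Coalgebra.Repr F a ι) :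
    ∑ i ∈ r.index, Coalgebra.counit (R := F) (r.right i) • r.left i = a := by
  have h := congrArg (TensorProduct.rid F H) (Coalgebra.sum_tmul_counit_eq r)
  simp only [map_sum, TensorProduct.rid_tmul] at h
  simpa using h

lemma sum_counit_smul_right {a : H} {ι : Type*} (r : Coalgebra.Repr F a ι) :
    ∑ i ∈ r.index, Coalgebra.counit (R := F) (r.left i) • r.right i = a := by
  have h := congrArg (TensorProduct.lid F H) (Coalgebra.sum_counit_tmul_eq r)
  simp only [map_sum, TensorProduct.lid_tmul] at h
  simpa using h

lemma pair_collapse {X P : H} {ι κ : Type*} (rX : Coalgebra.Repr F X ι) (rP : Coalgebra.Repr F P κ) :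
    ∑ k ∈ rX.index, ∑ l ∈ rP.index,
      HopfAlgebra.antipode (R := F) (rX.left k * rP.left l) * (rX.right k * rP.right l)
      = algebraMap F H (Coalgebra.counit X * Coalgebra.counit P) := by
  have he : ∑ k ∈ rX.index, ∑ l ∈ rP.index,
      (rX.left k * rP.left l) ⊗ₜ[F] (rX.right k * rP.right l) = Coalgebra.comul (X * P) := by
    rw [Bialgebra.comul_mul, ← rX.eq, ← rP.eq, Finset.sum_mul_sum]
    simp [Algebra.TensorProduct.tmul_mul_tmul]
  have h2 := congrArg (LinearMap.mul' F H ∘ₗ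
    (HopfAlgebra.antipode (R := F) (A := H)).rTensor H) he
  simp only [map_sum, LinearMap.comp_apply, LinearMap.rTensor_tmul,
    LinearMap.mul'_apply] at h2
  rw [h2, HopfAlgebra.mul_antipode_rTensor_comul_apply, Bialgebra.counit_mul]

lemma mul_algebraMap_eq_smul (r : F) (x : H) : x * algebraMap F H r = r • x := by
  rw [← Algebra.commutes, ← Algebra.smul_def]


lemma sum_comm4 {ι κ : Type*} {M : Type*} [AddCommMonoid M]
    {A : ι → Type*} {B : κ → Type*} (s : Finset ι) (t : Finset κ)
    (Ka : ∀ i, Finset (A i)) (Kb : ∀ j, Finset (B j))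
    (f : ∀ (i : ι) (j : κ), A i → B j → M) :
    (∑ i ∈ s, ∑ k ∈ Ka i, ∑ j ∈ t, ∑ l ∈ Kb j, f i j k l)
      = ∑ j ∈ t, ∑ l ∈ Kb j, ∑ i ∈ s, ∑ k ∈ Ka i, f i j k l := by
  calc (∑ i ∈ s, ∑ k ∈ Ka i, ∑ j ∈ t, ∑ l ∈ Kb j, f i j k l)
      = ∑ i ∈ s, ∑ j ∈ t, ∑ k ∈ Ka i, ∑ l ∈ Kb j, f i j k l :=
        Finset.sum_congr rfl fun i _ => Finset.sum_comm
    _ = ∑ j ∈ t, ∑ i ∈ s, ∑ k ∈ Ka i, ∑ l ∈ Kb j, f i j k l := Finset.sum_comm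
    _ = ∑ j ∈ t, ∑ i ∈ s, ∑ l ∈ Kb j, ∑ k ∈ Ka i, f i j k l :=
        Finset.sum_congr rfl fun j _ => Finset.sum_congr rfl fun i _ => Finset.sum_comm
    _ = ∑ j ∈ t, ∑ l ∈ Kb j, ∑ i ∈ s, ∑ k ∈ Ka i, f i j k l :=
        Finset.sum_congr rfl fun j _ => Finset.sum_comm

theorem antipode_mul_rev (a b : H) :
    HopfAlgebra.antipode (R := F) (a * b)
      = HopfAlgebra.antipode (R := F) b * HopfAlgebra.antipode (R := F) a := by
  let S : H →ₗ[F] H := HopfAlgebra.antipode (R := F) (A := H)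
  show S (a*b) = S b * S a
  let ra := ℛ F a
  let rb := ℛ F b
  let ral : ∀ i : ra.ι, Coalgebra.Repr F (ra.left i) (H × H) := fun i => ℛ F _
  let rai : ∀ i : ra.ι, Coalgebra.Repr F (ra.right i) (H × H) := fun i => ℛ F _
  let rbl : ∀ j : rb.ι, Coalgebra.Repr F (rb.left j) (H × H) := fun j => ℛ F _
  let rbi : ∀ j : rb.ι, Coalgebra.Repr F (rb.right j) (H × H) := fun j => ℛ F _
  have key : (∑ i ∈ ra.index, ∑ k ∈ (rai i).index, ∑ j ∈ rb.index, ∑ l ∈ (rbi j).index,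
        S (ra.left i * rb.left j) *
          ((rai i).left k * ((rbi j).left l * (S ((rbi j).right l) * S ((rai i).right k)))))
      = ∑ i ∈ ra.index, ∑ k ∈ (ral i).index, ∑ j ∈ rb.index, ∑ l ∈ (rbl j).index,
        S ((ral i).left k * (rbl j).left l) *
          (((ral i).right k * (rbl j).right l) * (S (rb.right j) * S (ra.right i))) := by
    calc (∑ i ∈ ra.index, ∑ k ∈ (rai i).index, ∑ j ∈ rb.index, ∑ l ∈ (rbi j).index,
          S (ra.left i * rb.left j) *
            ((rai i).left k * ((rbi j).left l * (S ((rbi j).right l) * S ((rai i).right k)))))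
        = ∑ j ∈ rb.index, ∑ l ∈ (rbi j).index, ∑ i ∈ ra.index, ∑ k ∈ (rai i).index,
          S (ra.left i * rb.left j) *
            ((rai i).left k * ((rbi j).left l * (S ((rbi j).right l) * S ((rai i).right k)))) :=
          sum_comm4 _ _ _ _ _
      _ = ∑ j ∈ rb.index, ∑ l ∈ (rbi j).index, ∑ i ∈ ra.index, ∑ k ∈ (ral i).index,
          S ((ral i).left k * rb.left j) *
            ((ral i).right k * ((rbi j).left l * (S ((rbi j).right l) * S (ra.right i)))) := by
          refine Finset.sum_congr rfl fun j _ => Finset.sum_congr rfl fun l _ => ?_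
          have h := repr_switch
            (triMul (S ∘ₗ LinearMap.mulRight F (rb.left j)) LinearMap.id
              (LinearMap.mulLeft F ((rbi j).left l) ∘ₗ
                LinearMap.mulLeft F (S ((rbi j).right l)) ∘ₗ S))
            ra ral rai
          simpa using h.symm
      _ = ∑ i ∈ ra.index, ∑ k ∈ (ral i).index, ∑ j ∈ rb.index, ∑ l ∈ (rbi j).index,
          S ((ral i).left k * rb.left j) *
            ((ral i).right k * ((rbi j).left l * (S ((rbi j).right l) * S (ra.right i)))) :=
          (sum_comm4 _ _ _ _ _).symm
      _ = ∑ i ∈ ra.index, ∑ k ∈ (ral i).index, ∑ j ∈ rb.index, ∑ l ∈ (rbl j).index,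
          S ((ral i).left k * (rbl j).left l) *
            (((ral i).right k * (rbl j).right l) * (S (rb.right j) * S (ra.right i))) := by
          refine Finset.sum_congr rfl fun i _ => Finset.sum_congr rfl fun k _ => ?_
          have h := repr_switch
            (triMul (S ∘ₗ LinearMap.mulLeft F ((ral i).left k))
              (LinearMap.mulLeft F ((ral i).right k))
              (LinearMap.mulRight F (S (ra.right i)) ∘ₗ S))
            rb rbl rbi
          calc (∑ j ∈ rb.index, ∑ l ∈ (rbi j).index,
                S ((ral i).left k * rb.left j) *
                  ((ral i).right k * ((rbi j).left l * (S ((rbi j).right l) * S (ra.right i)))))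
              = ∑ j ∈ rb.index, ∑ l ∈ (rbi j).index,
                S ((ral i).left k * rb.left j) *
                  (((ral i).right k * (rbi j).left l) * (S ((rbi j).right l) * S (ra.right i))) := by
                simp [mul_assoc]
            _ = ∑ j ∈ rb.index, ∑ l ∈ (rbl j).index,
                S ((ral i).left k * (rbl j).left l) *
                  (((ral i).right k * (rbl j).right l) * (S (rb.right j) * S (ra.right i))) := by
                simpa using h.symm
  have halg : ∀ (u v w : H) (r : F), u * (v * (algebraMap F H r * w)) = r • (u * (v * w)) := by
    intro u v w r
    rw [← Algebra.smul_def, mul_smul_comm, mul_smul_comm]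
  have evalA : (∑ i ∈ ra.index, ∑ k ∈ (rai i).index, ∑ j ∈ rb.index, ∑ l ∈ (rbi j).index,
        S (ra.left i * rb.left j) *
          ((rai i).left k * ((rbi j).left l * (S ((rbi j).right l) * S ((rai i).right k)))))
      = S (a * b) := by
    have lcol : ∀ (i : ra.ι) (k : (rai i).ι) (j : rb.ι),
        (∑ l ∈ (rbi j).index, (rbi j).left l * (S ((rbi j).right l) * S ((rai i).right k)))
          = algebraMap F H (Coalgebra.counit (rb.right j)) * S ((rai i).right k) := by
      intro i k j
      calc (∑ l ∈ (rbi j).index, (rbi j).left l * (S ((rbi j).right l) * S ((rai i).right k)))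
          = ∑ l ∈ (rbi j).index, ((rbi j).left l * S ((rbi j).right l)) * S ((rai i).right k) :=
            Finset.sum_congr rfl fun l _ => (mul_assoc _ _ _).symm
        _ = (∑ l ∈ (rbi j).index, (rbi j).left l * S ((rbi j).right l)) * S ((rai i).right k) :=
            (Finset.sum_mul _ _ _).symm
        _ = algebraMap F H (Coalgebra.counit (rb.right j)) * S ((rai i).right k) := by
            rw [HopfAlgebra.sum_mul_antipode_eq_algebraMap_counit (rbi j)]
    calc (∑ i ∈ ra.index, ∑ k ∈ (rai i).index, ∑ j ∈ rb.index, ∑ l ∈ (rbi j).index,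
          S (ra.left i * rb.left j) *
            ((rai i).left k * ((rbi j).left l * (S ((rbi j).right l) * S ((rai i).right k)))))
        = ∑ i ∈ ra.index, ∑ k ∈ (rai i).index, ∑ j ∈ rb.index,
            Coalgebra.counit (R := F) (rb.right j) •
              (S (ra.left i * rb.left j) * ((rai i).left k * S ((rai i).right k))) := by
          refine Finset.sum_congr rfl fun i _ => Finset.sum_congr rfl fun k _ =>
            Finset.sum_congr rfl fun j _ => ?_
          rw [← Finset.mul_sum, ← Finset.mul_sum, lcol i k j, halg]
      _ = ∑ i ∈ ra.index, ∑ k ∈ (rai i).index,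
            S (ra.left i * b) * ((rai i).left k * S ((rai i).right k)) := by
          refine Finset.sum_congr rfl fun i _ => Finset.sum_congr rfl fun k _ => ?_
          have hmap := congrArg
            (LinearMap.mulRight F ((rai i).left k * S ((rai i).right k)) ∘ₗ S ∘ₗ
              LinearMap.mulLeft F (ra.left i)) (sum_counit_smul_left rb)
          simp only [map_sum, map_smul, LinearMap.comp_apply, LinearMap.mulLeft_apply,
            LinearMap.mulRight_apply] at hmap
          exact hmap
      _ = ∑ i ∈ ra.index, Coalgebra.counit (R := F) (ra.right i) • S (ra.left i * b) := by
          refine Finset.sum_congr rfl fun i _ => ?_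
          rw [← Finset.mul_sum, HopfAlgebra.sum_mul_antipode_eq_algebraMap_counit (rai i),
            mul_algebraMap_eq_smul]
      _ = S (a * b) := by
          have hmap := congrArg (S ∘ₗ LinearMap.mulRight F b) (sum_counit_smul_left ra)
          simp only [map_sum, map_smul, LinearMap.comp_apply, LinearMap.mulRight_apply] at hmap
          exact hmap
  have evalB : (∑ i ∈ ra.index, ∑ k ∈ (ral i).index, ∑ j ∈ rb.index, ∑ l ∈ (rbl j).index,
        S ((ral i).left k * (rbl j).left l) *
          (((ral i).right k * (rbl j).right l) * (S (rb.right j) * S (ra.right i))))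
      = S b * S a := by
    calc (∑ i ∈ ra.index, ∑ k ∈ (ral i).index, ∑ j ∈ rb.index, ∑ l ∈ (rbl j).index,
          S ((ral i).left k * (rbl j).left l) *
            (((ral i).right k * (rbl j).right l) * (S (rb.right j) * S (ra.right i))))
        = ∑ i ∈ ra.index, ∑ j ∈ rb.index, ∑ k ∈ (ral i).index, ∑ l ∈ (rbl j).index,
          S ((ral i).left k * (rbl j).left l) *
            (((ral i).right k * (rbl j).right l) * (S (rb.right j) * S (ra.right i))) :=
          Finset.sum_congr rfl fun i _ => Finset.sum_comm
      _ = ∑ i ∈ ra.index, ∑ j ∈ rb.index,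
            (Coalgebra.counit (R := F) (ra.left i) * Coalgebra.counit (R := F) (rb.left j)) •
              (S (rb.right j) * S (ra.right i)) := by
          refine Finset.sum_congr rfl fun i _ => Finset.sum_congr rfl fun j _ => ?_
          calc (∑ k ∈ (ral i).index, ∑ l ∈ (rbl j).index,
                S ((ral i).left k * (rbl j).left l) *
                  (((ral i).right k * (rbl j).right l) * (S (rb.right j) * S (ra.right i))))
              = ∑ k ∈ (ral i).index, ∑ l ∈ (rbl j).index,
                (S ((ral i).left k * (rbl j).left l) *
                  ((ral i).right k * (rbl j).right l)) * (S (rb.right j) * S (ra.right i)) :=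
                Finset.sum_congr rfl fun k _ => Finset.sum_congr rfl fun l _ =>
                  (mul_assoc _ _ _).symm
            _ = (∑ k ∈ (ral i).index, ∑ l ∈ (rbl j).index,
                S ((ral i).left k * (rbl j).left l) *
                  ((ral i).right k * (rbl j).right l)) * (S (rb.right j) * S (ra.right i)) := by
                rw [Finset.sum_mul]
                exact Finset.sum_congr rfl fun k _ => (Finset.sum_mul _ _ _).symm
            _ = (Coalgebra.counit (R := F) (ra.left i) * Coalgebra.counit (R := F) (rb.left j)) •
                  (S (rb.right j) * S (ra.right i)) := by
                rw [pair_collapse (ral i) (rbl j), Algebra.smul_def]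
      _ = S b * S a := by
          have inner : ∀ i : ra.ι, (∑ j ∈ rb.index,
              (Coalgebra.counit (R := F) (ra.left i) * Coalgebra.counit (R := F) (rb.left j)) •
                (S (rb.right j) * S (ra.right i)))
              = Coalgebra.counit (R := F) (ra.left i) • (S b * S (ra.right i)) := by
            intro i
            have hmap := congrArg (LinearMap.mulRight F (S (ra.right i)) ∘ₗ S)
              (sum_counit_smul_right rb)
            simp only [map_sum, map_smul, LinearMap.comp_apply,
              LinearMap.mulRight_apply] at hmap
            calc (∑ j ∈ rb.index,
                (Coalgebra.counit (R := F) (ra.left i) * Coalgebra.counit (R := F) (rb.left j)) •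
                  (S (rb.right j) * S (ra.right i)))
                = Coalgebra.counit (R := F) (ra.left i) • ∑ j ∈ rb.index,
                    Coalgebra.counit (R := F) (rb.left j) • (S (rb.right j) * S (ra.right i)) := by
                  rw [Finset.smul_sum]
                  exact Finset.sum_congr rfl fun j _ => (mul_smul _ _ _)
              _ = Coalgebra.counit (R := F) (ra.left i) • (S b * S (ra.right i)) := by rw [hmap]
          rw [Finset.sum_congr rfl fun i _ => inner i]
          have hmap := congrArg (LinearMap.mulLeft F (S b) ∘ₗ S) (sum_counit_smul_right ra)
          simp only [map_sum, map_smul, LinearMap.comp_apply, LinearMap.mulLeft_apply] at hmap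
          exact hmap
  calc S (a*b) = _ := evalA.symm
    _ = _ := key
    _ = S b * S a := evalB

/-! ### representations of Phi, PhiL on pure tensors -/

noncomputable def mulRepr {q1 q2 : H} {ι₁ ι₂ : Type*} (r1 : Coalgebra.Repr F q1 ι₁)
    (r2 : Coalgebra.Repr F q2 ι₂) :
    Coalgebra.Repr F (q1 * q2) (ι₁ × ι₂) where
  index := r1.index ×ˢ r2.index
  left := fun x => r1.left x.1 * r2.left x.2
  right := fun x => r1.right x.1 * r2.right x.2
  eq := by
    rw [Bialgebra.comul_mul, ← r1.eq, ← r2.eq, Finset.sum_mul_sum]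
    rw [Finset.sum_product]
    exact Finset.sum_congr rfl fun j _ => Finset.sum_congr rfl fun k _ => by
      rw [Algebra.TensorProduct.tmul_mul_tmul]

lemma Phi_repr (c : V) (p q : H) (v : V) {ι : Type*} (rq : Coalgebra.Repr F q ι) :
    Phi F H V c ((p ⊗ₜ[F] q) ⊗ₜ[F] v)
      = ∑ j ∈ rq.index, (p ⊗ₜ[F] rq.left j) ⊗ₜ[F]
          (v * (HopfAlgebra.antipode (R := F) (rq.right j) • c)) := by
  have h0 : Phi F H V c ((p ⊗ₜ[F] q) ⊗ₜ[F] v)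
      = (TensorProduct.map LinearMap.id (TensorProduct.lift (rmulAct F H V c)))
          ((TensorProduct.assoc F (H ⊗[F] H) H V)
            ((TensorProduct.map (TensorProduct.assoc F H H H).symm.toLinearMap LinearMap.id)
              ((p ⊗ₜ[F] Coalgebra.comul q) ⊗ₜ[F] v))) := by
    simp [Phi]
  rw [h0, ← rq.eq, TensorProduct.tmul_sum, TensorProduct.sum_tmul, map_sum, map_sum, map_sum]
  refine Finset.sum_congr rfl fun j _ => ?_
  simp [rmulAct]

lemma PhiL_repr (a : V) (f g : H) (e : V) {ι : Type*} (rf : Coalgebra.Repr F f ι) :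
    PhiL F H V a ((f ⊗ₜ[F] g) ⊗ₜ[F] e)
      = ∑ i ∈ rf.index, (rf.left i ⊗ₜ[F] g) ⊗ₜ[F]
          ((HopfAlgebra.antipode (R := F) (rf.right i) • a) * e) := by
  have h0 : PhiL F H V a ((f ⊗ₜ[F] g) ⊗ₜ[F] e)
      = (TensorProduct.map LinearMap.id (TensorProduct.lift (lmulAct F H V a)))
          ((TensorProduct.tensorTensorTensorComm F H H H V)
            ((TensorProduct.assoc F (H ⊗[F] H) H V)
              ((Coalgebra.comul f ⊗ₜ[F] g) ⊗ₜ[F] e))) := by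
    simp [PhiL]
  rw [h0, ← rf.eq, TensorProduct.sum_tmul, TensorProduct.sum_tmul, map_sum, map_sum, map_sum]
  refine Finset.sum_congr rfl fun i _ => ?_
  simp [lmulAct]

/-! ### the flip map and its descent -/

noncomputable def Smap : (H ⊗[F] H) ⊗[F] V →ₗ[F] (H ⊗[F] H) ⊗[F] V :=
  TensorProduct.map (TensorProduct.comm F H H).toLinearMap LinearMap.id

lemma comm_mul (x y : H ⊗[F] H) :
    (TensorProduct.comm F H H) (x * y)
      = (TensorProduct.comm F H H) x * (TensorProduct.comm F H H) y := by
  induction x using TensorProduct.induction_on with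
  | zero => simp
  | tmul f g =>
    induction y using TensorProduct.induction_on with
    | zero => simp
    | tmul f' g' => simp [Algebra.TensorProduct.tmul_mul_tmul]
    | add y1 y2 h1 h2 => rw [mul_add, map_add, h1, h2, map_add, mul_add]
  | add x1 x2 h1 h2 => rw [add_mul, map_add, h1, h2, map_add, add_mul]

lemma Smap_rel (hcc : ∀ h : H, (TensorProduct.comm F H H) (Coalgebra.comul h) = Coalgebra.comul h) :
    ∀ v ∈ relSub F H V, Smap v ∈ relSub F H V := by
  intro v hv
  induction hv using Submodule.span_induction with
  | mem x hx =>
    obtain ⟨w, h, u, rfl⟩ := hx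
    rw [map_sub]
    simp only [Smap, TensorProduct.map_tmul, LinearMap.id_coe, id_eq, LinearEquiv.coe_coe]
    rw [comm_mul, hcc h]
    exact Submodule.subset_span ⟨(TensorProduct.comm F H H) w, h, u, rfl⟩
  | zero => simp
  | add _ _ _ _ h1 h2 => rw [map_add]; exact Submodule.add_mem _ h1 h2
  | smul r _ _ h1 => rw [map_smul]; exact Submodule.smul_mem _ r h1

lemma Smap_Smap (v : (H ⊗[F] H) ⊗[F] V) : Smap (Smap v) = v := by
  induction v using TensorProduct.induction_on with
  | zero => simp
  | tmul w e =>
    induction w using TensorProduct.induction_on with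
    | zero => simp [TensorProduct.zero_tmul]
    | tmul f g => simp [Smap]
    | add w1 w2 h1 h2 =>
      rw [TensorProduct.add_tmul, map_add, map_add, h1, h2]
  | add v1 v2 h1 h2 => rw [map_add, map_add, h1, h2]

/-! ### trilinear/bilinear constructors -/

noncomputable def tens3 (A B : H →ₗ[F] H) (ψ : H →ₗ[F] V) :
    H →ₗ[F] H →ₗ[F] H →ₗ[F] ((H ⊗[F] H) ⊗[F] V) where
  toFun x := LinearMap.mk₂ F (fun m n => ((A x) ⊗ₜ[F] (B m)) ⊗ₜ[F] (ψ n))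
    (fun m m' n => by simp [map_add, TensorProduct.tmul_add, TensorProduct.add_tmul])
    (fun r m n => by simp [map_smul, TensorProduct.tmul_smul, TensorProduct.smul_tmul'])
    (fun m n n' => by simp [map_add, TensorProduct.tmul_add])
    (fun r m n => by simp [map_smul, TensorProduct.tmul_smul])
  map_add' x x' := by
    refine LinearMap.ext fun m => LinearMap.ext fun n => ?_
    simp [map_add, TensorProduct.add_tmul]
    rfl
  map_smul' r x := by
    refine LinearMap.ext fun m => LinearMap.ext fun n => ?_
    simp [map_smul, TensorProduct.smul_tmul']
    rfl

@[simp] lemma tens3_apply (A B : H →ₗ[F] H) (ψ : H →ₗ[F] V) (x m n : H) :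
    tens3 A B ψ x m n = ((A x) ⊗ₜ[F] (B m)) ⊗ₜ[F] (ψ n) := rfl

noncomputable def phi0 : H →ₗ[F] H →ₗ[F] H →ₗ[F] (H ⊗[F] H) where
  toFun x := LinearMap.mk₂ F
    (fun m n => x ⊗ₜ[F] (m * HopfAlgebra.antipode (R := F) n))
    (fun m m' n => by simp [add_mul, TensorProduct.tmul_add])
    (fun r m n => by simp [smul_mul_assoc, TensorProduct.tmul_smul])
    (fun m n n' => by simp [map_add, mul_add, TensorProduct.tmul_add])
    (fun r m n => by simp [map_smul, mul_smul_comm, TensorProduct.tmul_smul])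
  map_add' x x' := by
    refine LinearMap.ext fun m => LinearMap.ext fun n => ?_
    simp [TensorProduct.add_tmul]
  map_smul' r x := by
    refine LinearMap.ext fun m => LinearMap.ext fun n => ?_
    simp [TensorProduct.smul_tmul']

@[simp] lemma phi0_apply (x m n : H) :
    phi0 x m n = x ⊗ₜ[F] (m * HopfAlgebra.antipode (R := F) n) := rfl

noncomputable def bil2 (w : H ⊗[F] H) (u z : V) :
    H →ₗ[F] H →ₗ[F] ((H ⊗[F] H) ⊗[F] V) :=
  LinearMap.mk₂ F (fun k n => w ⊗ₜ[F] ((k • u) * (n • z)))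
    (fun k k' n => by simp [add_smul, add_mul, TensorProduct.tmul_add])
    (fun r k n => by simp [smul_assoc, smul_mul_assoc, TensorProduct.tmul_smul])
    (fun k n n' => by simp [add_smul, mul_add, TensorProduct.tmul_add])
    (fun r k n => by simp [smul_assoc, mul_smul_comm, TensorProduct.tmul_smul])

@[simp] lemma bil2_apply (w : H ⊗[F] H) (u z : V) (k n : H) :
    bil2 w u z k n = w ⊗ₜ[F] ((k • u) * (n • z)) := rfl

/-! ### basic relSub facts -/

lemma pi_rel (w : H ⊗[F] H) (h : H) (u : V) :
    (relSub F H V).mkQ ((w * Coalgebra.comul h) ⊗ₜ[F] u)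
      = (relSub F H V).mkQ (w ⊗ₜ[F] (h • u)) := by
  rw [Submodule.mkQ_apply, Submodule.mkQ_apply, Submodule.Quotient.eq]
  exact Submodule.subset_span ⟨w, h, u, rfl⟩

lemma hdiff_repr
    (hdiff : ∀ (h : H) (a b : V),
      h • (a * b)
        = (LinearMap.mul' F V)
            ((TensorProduct.map (TensorProduct.lift (hAct F H V))
                (TensorProduct.lift (hAct F H V)))
              ((TensorProduct.tensorTensorTensorComm F H H V V)
                (Coalgebra.comul h ⊗ₜ[F] (a ⊗ₜ[F] b)))))
    (h : H) (x y : V) {ι : Type*} (r : Coalgebra.Repr F h ι) :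
    h • (x * y) = ∑ k ∈ r.index, (r.left k • x) * (r.right k • y) := by
  rw [hdiff h x y, ← r.eq, TensorProduct.sum_tmul, map_sum, map_sum, map_sum]
  refine Finset.sum_congr rfl fun k _ => ?_
  simp [hAct]


/-! ### Phi descends to the quotient -/

lemma Phi_mkQ_mul (hdiff : ∀ (h : H) (a b : V),
      h • (a * b)
        = (LinearMap.mul' F V)
            ((TensorProduct.map (TensorProduct.lift (hAct F H V))
                (TensorProduct.lift (hAct F H V)))
              ((TensorProduct.tensorTensorTensorComm F H H V V)
                (Coalgebra.comul h ⊗ₜ[F] (a ⊗ₜ[F] b)))))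
    (c : V) (f g h : H) (u : V) :
    (relSub F H V).mkQ (Phi F H V c (((f ⊗ₜ[F] g) * Coalgebra.comul h) ⊗ₜ[F] u))
      = (relSub F H V).mkQ (Phi F H V c ((f ⊗ₜ[F] g) ⊗ₜ[F] (h • u))) := by
  classical
  let rh := ℛ F h
  let rg := ℛ F g
  let rx : ∀ i : rh.ι, Coalgebra.Repr F (rh.left i) (H × H) := fun i => ℛ F _
  let ry : ∀ i : rh.ι, Coalgebra.Repr F (rh.right i) (H × H) := fun i => ℛ F _
  have step1 : ((f ⊗ₜ[F] g) * Coalgebra.comul h) ⊗ₜ[F] u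
      = ∑ i ∈ rh.index, ((f * rh.left i) ⊗ₜ[F] (g * rh.right i)) ⊗ₜ[F] u := by
    rw [← rh.eq, Finset.mul_sum, TensorProduct.sum_tmul]
    exact Finset.sum_congr rfl fun i _ => by rw [Algebra.TensorProduct.tmul_mul_tmul]
  have step2 : ∀ i : rh.ι,
      Phi F H V c (((f * rh.left i) ⊗ₜ[F] (g * rh.right i)) ⊗ₜ[F] u)
        = ∑ j ∈ rg.index, ∑ k ∈ (ry i).index,
            ((f * rh.left i) ⊗ₜ[F] (rg.left j * (ry i).left k)) ⊗ₜ[F]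
              (u * (HopfAlgebra.antipode (R := F) ((ry i).right k) •
                (HopfAlgebra.antipode (R := F) (rg.right j) • c))) := by
    intro i
    rw [Phi_repr c _ _ u (mulRepr rg (ry i))]
    have e1 : (∑ j ∈ (mulRepr rg (ry i)).index,
        ((f * rh.left i) ⊗ₜ[F] (mulRepr rg (ry i)).left j) ⊗ₜ[F]
          (u * (HopfAlgebra.antipode (R := F) ((mulRepr rg (ry i)).right j) • c)))
        = ∑ x ∈ rg.index ×ˢ (ry i).index,
          ((f * rh.left i) ⊗ₜ[F] (rg.left x.1 * (ry i).left x.2)) ⊗ₜ[F]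
            (u * (HopfAlgebra.antipode (R := F) (rg.right x.1 * (ry i).right x.2) • c)) := rfl
    rw [e1, Finset.sum_product]
    refine Finset.sum_congr rfl fun j _ => Finset.sum_congr rfl fun k _ => ?_
    show ((f * rh.left i) ⊗ₜ[F] (rg.left j * (ry i).left k)) ⊗ₜ[F]
        (u * (HopfAlgebra.antipode (R := F) (rg.right j * (ry i).right k) • c)) = _
    rw [antipode_mul_rev, mul_smul]
  have hswitch : ∀ j : rg.ι,
      (∑ i ∈ rh.index, ∑ k ∈ (ry i).index,
        ((f * rh.left i) ⊗ₜ[F] (rg.left j * (ry i).left k)) ⊗ₜ[F]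
          (u * (HopfAlgebra.antipode (R := F) ((ry i).right k) •
            (HopfAlgebra.antipode (R := F) (rg.right j) • c))))
      = ∑ i ∈ rh.index, ∑ k ∈ (rx i).index,
        ((f * (rx i).left k) ⊗ₜ[F] (rg.left j * (rx i).right k)) ⊗ₜ[F]
          (u * (HopfAlgebra.antipode (R := F) (rh.right i) •
            (HopfAlgebra.antipode (R := F) (rg.right j) • c))) := by
    intro j
    have hsw := repr_switch
      (tens3 (LinearMap.mulLeft F f) (LinearMap.mulLeft F (rg.left j))
        ((rmulAct F H V (HopfAlgebra.antipode (R := F) (rg.right j) • c)).flip u))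
      rh rx ry
    simpa [rmulAct, LinearMap.flip_apply] using hsw.symm
  have hrel : ∀ (j : rg.ι) (i : rh.ι),
      (∑ k ∈ (rx i).index, (relSub F H V).mkQ
          (((f * (rx i).left k) ⊗ₜ[F] (rg.left j * (rx i).right k)) ⊗ₜ[F]
            (u * (HopfAlgebra.antipode (R := F) (rh.right i) •
              (HopfAlgebra.antipode (R := F) (rg.right j) • c)))))
      = (relSub F H V).mkQ ((f ⊗ₜ[F] rg.left j) ⊗ₜ[F]
          (rh.left i • (u * (HopfAlgebra.antipode (R := F) (rh.right i) •
            (HopfAlgebra.antipode (R := F) (rg.right j) • c))))) := by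
    intro j i
    rw [← map_sum]
    have hsum : (∑ k ∈ (rx i).index,
        ((f * (rx i).left k) ⊗ₜ[F] (rg.left j * (rx i).right k)) ⊗ₜ[F]
          (u * (HopfAlgebra.antipode (R := F) (rh.right i) •
            (HopfAlgebra.antipode (R := F) (rg.right j) • c))))
        = ((f ⊗ₜ[F] rg.left j) * Coalgebra.comul (rh.left i)) ⊗ₜ[F]
          (u * (HopfAlgebra.antipode (R := F) (rh.right i) •
            (HopfAlgebra.antipode (R := F) (rg.right j) • c))) := by
      rw [← (rx i).eq, Finset.mul_sum, TensorProduct.sum_tmul]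
      exact Finset.sum_congr rfl fun k _ => by rw [Algebra.TensorProduct.tmul_mul_tmul]
    rw [hsum, pi_rel]
  have hhd : ∀ (j : rg.ι) (i : rh.ι),
      rh.left i • (u * (HopfAlgebra.antipode (R := F) (rh.right i) •
          (HopfAlgebra.antipode (R := F) (rg.right j) • c)))
        = ∑ k ∈ (rx i).index, ((rx i).left k • u) *
            (((rx i).right k * HopfAlgebra.antipode (R := F) (rh.right i)) •
              (HopfAlgebra.antipode (R := F) (rg.right j) • c)) := by
    intro j i
    rw [hdiff_repr hdiff _ _ _ (rx i)]
    exact Finset.sum_congr rfl fun k _ => by rw [mul_smul]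
  have hcol : (∑ i ∈ rh.index, ∑ k ∈ (rx i).index,
      (rx i).left k ⊗ₜ[F] ((rx i).right k * HopfAlgebra.antipode (R := F) (rh.right i)))
      = h ⊗ₜ[F] (1 : H) := by
    have hsw := repr_switch (phi0 (F := F) (H := H)) rh rx ry
    calc (∑ i ∈ rh.index, ∑ k ∈ (rx i).index,
          (rx i).left k ⊗ₜ[F] ((rx i).right k * HopfAlgebra.antipode (R := F) (rh.right i)))
        = ∑ i ∈ rh.index, ∑ k ∈ (ry i).index,
          rh.left i ⊗ₜ[F] ((ry i).left k * HopfAlgebra.antipode (R := F) ((ry i).right k)) := by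
          simpa using hsw
      _ = ∑ i ∈ rh.index, rh.left i ⊗ₜ[F] (algebraMap F H (Coalgebra.counit (rh.right i))) := by
          refine Finset.sum_congr rfl fun i _ => ?_
          rw [← TensorProduct.tmul_sum, HopfAlgebra.sum_mul_antipode_eq_algebraMap_counit (ry i)]
      _ = ∑ i ∈ rh.index, Coalgebra.counit (R := F) (rh.right i) • (rh.left i ⊗ₜ[F] (1:H)) := by
          refine Finset.sum_congr rfl fun i _ => ?_
          rw [Algebra.algebraMap_eq_smul_one, TensorProduct.tmul_smul]
      _ = (∑ i ∈ rh.index, Coalgebra.counit (R := F) (rh.right i) • rh.left i) ⊗ₜ[F] (1:H) := by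
          rw [TensorProduct.sum_tmul]
          exact Finset.sum_congr rfl fun i _ => (TensorProduct.smul_tmul' _ _ _).symm
      _ = h ⊗ₜ[F] (1:H) := by rw [sum_counit_smul_left rh]
  have hfin : ∀ j : rg.ι,
      (∑ i ∈ rh.index, ∑ k ∈ (rx i).index,
        (relSub F H V).mkQ ((f ⊗ₜ[F] rg.left j) ⊗ₜ[F]
          (((rx i).left k • u) *
            (((rx i).right k * HopfAlgebra.antipode (R := F) (rh.right i)) •
              (HopfAlgebra.antipode (R := F) (rg.right j) • c)))))
      = (relSub F H V).mkQ ((f ⊗ₜ[F] rg.left j) ⊗ₜ[F]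
          ((h • u) * (HopfAlgebra.antipode (R := F) (rg.right j) • c))) := by
    intro j
    have hmap := congrArg ((relSub F H V).mkQ ∘ₗ
      TensorProduct.lift (bil2 (f ⊗ₜ[F] rg.left j) u
        (HopfAlgebra.antipode (R := F) (rg.right j) • c))) hcol
    simp only [map_sum, LinearMap.comp_apply, TensorProduct.lift.tmul, bil2_apply] at hmap
    simpa [one_smul] using hmap
  calc (relSub F H V).mkQ (Phi F H V c (((f ⊗ₜ[F] g) * Coalgebra.comul h) ⊗ₜ[F] u))
      = ∑ i ∈ rh.index, (relSub F H V).mkQ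
          (Phi F H V c (((f * rh.left i) ⊗ₜ[F] (g * rh.right i)) ⊗ₜ[F] u)) := by
        rw [step1, map_sum, map_sum]
    _ = ∑ i ∈ rh.index, ∑ j ∈ rg.index, ∑ k ∈ (ry i).index, (relSub F H V).mkQ
          (((f * rh.left i) ⊗ₜ[F] (rg.left j * (ry i).left k)) ⊗ₜ[F]
            (u * (HopfAlgebra.antipode (R := F) ((ry i).right k) •
              (HopfAlgebra.antipode (R := F) (rg.right j) • c)))) := by
        refine Finset.sum_congr rfl fun i _ => ?_
        rw [step2 i, map_sum]
        exact Finset.sum_congr rfl fun j _ => by rw [map_sum]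
    _ = ∑ j ∈ rg.index, ∑ i ∈ rh.index, ∑ k ∈ (ry i).index, (relSub F H V).mkQ
          (((f * rh.left i) ⊗ₜ[F] (rg.left j * (ry i).left k)) ⊗ₜ[F]
            (u * (HopfAlgebra.antipode (R := F) ((ry i).right k) •
              (HopfAlgebra.antipode (R := F) (rg.right j) • c)))) := Finset.sum_comm
    _ = ∑ j ∈ rg.index, ∑ i ∈ rh.index, ∑ k ∈ (rx i).index, (relSub F H V).mkQ
          (((f * (rx i).left k) ⊗ₜ[F] (rg.left j * (rx i).right k)) ⊗ₜ[F]
            (u * (HopfAlgebra.antipode (R := F) (rh.right i) •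
              (HopfAlgebra.antipode (R := F) (rg.right j) • c)))) := by
        refine Finset.sum_congr rfl fun j _ => ?_
        have hj := congrArg (relSub F H V).mkQ (hswitch j)
        simpa only [map_sum] using hj
    _ = ∑ j ∈ rg.index, ∑ i ∈ rh.index, (relSub F H V).mkQ
          ((f ⊗ₜ[F] rg.left j) ⊗ₜ[F]
            (rh.left i • (u * (HopfAlgebra.antipode (R := F) (rh.right i) •
              (HopfAlgebra.antipode (R := F) (rg.right j) • c))))) :=
        Finset.sum_congr rfl fun j _ => Finset.sum_congr rfl fun i _ => hrel j i
    _ = ∑ j ∈ rg.index, ∑ i ∈ rh.index, ∑ k ∈ (rx i).index, (relSub F H V).mkQ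
          ((f ⊗ₜ[F] rg.left j) ⊗ₜ[F]
            (((rx i).left k • u) *
              (((rx i).right k * HopfAlgebra.antipode (R := F) (rh.right i)) •
                (HopfAlgebra.antipode (R := F) (rg.right j) • c)))) := by
        refine Finset.sum_congr rfl fun j _ => Finset.sum_congr rfl fun i _ => ?_
        rw [hhd j i, TensorProduct.tmul_sum, map_sum]
    _ = ∑ j ∈ rg.index, (relSub F H V).mkQ
          ((f ⊗ₜ[F] rg.left j) ⊗ₜ[F]
            ((h • u) * (HopfAlgebra.antipode (R := F) (rg.right j) • c))) :=
        Finset.sum_congr rfl fun j _ => hfin j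
    _ = (relSub F H V).mkQ (Phi F H V c ((f ⊗ₜ[F] g) ⊗ₜ[F] (h • u))) := by
        rw [Phi_repr c f g (h • u) rg, map_sum]

lemma Phi_rel (hdiff : ∀ (h : H) (a b : V),
      h • (a * b)
        = (LinearMap.mul' F V)
            ((TensorProduct.map (TensorProduct.lift (hAct F H V))
                (TensorProduct.lift (hAct F H V)))
              ((TensorProduct.tensorTensorTensorComm F H H V V)
                (Coalgebra.comul h ⊗ₜ[F] (a ⊗ₜ[F] b)))))
    (c : V) : ∀ v ∈ relSub F H V, Phi F H V c v ∈ relSub F H V := by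
  intro v hv
  induction hv using Submodule.span_induction with
  | mem x hx =>
    obtain ⟨w, h, u, rfl⟩ := hx
    rw [map_sub]
    have main : (relSub F H V).mkQ (Phi F H V c ((w * Coalgebra.comul h) ⊗ₜ[F] u))
        = (relSub F H V).mkQ (Phi F H V c (w ⊗ₜ[F] (h • u))) := by
      induction w using TensorProduct.induction_on with
      | zero => simp
      | tmul f g => exact Phi_mkQ_mul hdiff c f g h u
      | add w1 w2 h1 h2 =>
        rw [add_mul, TensorProduct.add_tmul, TensorProduct.add_tmul, map_add, map_add,
          map_add, map_add, h1, h2]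
    rw [Submodule.mkQ_apply, Submodule.mkQ_apply, Submodule.Quotient.eq] at main
    exact main
  | zero => simp
  | add _ _ _ _ h1 h2 => rw [map_add]; exact Submodule.add_mem _ h1 h2
  | smul r _ _ h1 => rw [map_smul]; exact Submodule.smul_mem _ r h1


/-! ### linearity of Phi in its V-argument -/

lemma lift_rmulAct_add (c c' : V) :
    TensorProduct.lift (rmulAct F H V (c + c'))
      = TensorProduct.lift (rmulAct F H V c) + TensorProduct.lift (rmulAct F H V c') := by
  apply TensorProduct.ext'
  intro k e
  simp [rmulAct, smul_add, mul_add]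

lemma lift_rmulAct_smul (r : F) (c : V) :
    TensorProduct.lift (rmulAct F H V (r • c)) = r • TensorProduct.lift (rmulAct F H V c) := by
  apply TensorProduct.ext'
  intro k e
  have h1 : (HopfAlgebra.antipode (R := F) k) • (r • c)
      = r • (HopfAlgebra.antipode (R := F) k • c) := (smul_comm _ _ _).symm
  simp [rmulAct, h1, mul_smul_comm]

lemma Phi_add (c c' : V) (v : (H ⊗[F] H) ⊗[F] V) :
    Phi F H V (c + c') v = Phi F H V c v + Phi F H V c' v := by
  simp only [Phi, LinearMap.comp_apply]
  rw [lift_rmulAct_add]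
  have hmap : TensorProduct.map (LinearMap.id (R := F) (M := H ⊗[F] H))
      (TensorProduct.lift (rmulAct F H V c) + TensorProduct.lift (rmulAct F H V c'))
      = TensorProduct.map LinearMap.id (TensorProduct.lift (rmulAct F H V c))
        + TensorProduct.map LinearMap.id (TensorProduct.lift (rmulAct F H V c')) := by
    apply TensorProduct.ext'
    intro x y
    simp [TensorProduct.tmul_add]
  rw [hmap, LinearMap.add_apply]

lemma Phi_smul (r : F) (c : V) (v : (H ⊗[F] H) ⊗[F] V) :
    Phi F H V (r • c) v = r • Phi F H V c v := by
  simp only [Phi, LinearMap.comp_apply]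
  rw [lift_rmulAct_smul]
  have hmap : TensorProduct.map (LinearMap.id (R := F) (M := H ⊗[F] H))
      (r • TensorProduct.lift (rmulAct F H V c))
      = r • TensorProduct.map LinearMap.id (TensorProduct.lift (rmulAct F H V c)) := by
    apply TensorProduct.ext'
    intro x y
    simp [TensorProduct.tmul_smul]
  rw [hmap, LinearMap.smul_apply]

lemma Phi_zero (v : (H ⊗[F] H) ⊗[F] V) : Phi F H V 0 v = 0 := by
  have h := Phi_smul (0 : F) 0 v
  simpa using h

/-! ### PhiL in terms of Phi, under graded commutativity -/

lemma PhiL_eq (s : F) (G1 : ∀ x y : V, x * y = s • (y * x)) (a : V)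
    (v : (H ⊗[F] H) ⊗[F] V) :
    PhiL F H V a v = s • Smap (Phi F H V a (Smap v)) := by
  induction v using TensorProduct.induction_on with
  | zero => simp
  | tmul w e =>
    induction w using TensorProduct.induction_on with
    | zero => simp [TensorProduct.zero_tmul]
    | tmul f g =>
      have h1 : Smap ((f ⊗ₜ[F] g) ⊗ₜ[F] e) = (g ⊗ₜ[F] f) ⊗ₜ[F] e := by simp [Smap]
      rw [h1, Phi_repr a g f e (ℛ F f), PhiL_repr a f g e (ℛ F f), map_sum, Finset.smul_sum]
      refine Finset.sum_congr rfl fun i _ => ?_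
      rw [G1]
      simp [Smap, TensorProduct.tmul_smul]
    | add w1 w2 h1 h2 =>
      rw [TensorProduct.add_tmul, map_add, map_add, map_add, map_add, h1, h2, smul_add]
  | add v1 v2 h1 h2 => rw [map_add, map_add, map_add, map_add, h1, h2, smul_add]

/-! ### congruence helpers -/

lemma Smap_congr (hcc : ∀ h : H,
      (TensorProduct.comm F H H) (Coalgebra.comul h) = Coalgebra.comul h)
    {X Y : (H ⊗[F] H) ⊗[F] V}
    (hXY : (relSub F H V).mkQ X = (relSub F H V).mkQ Y) :
    (relSub F H V).mkQ (Smap X) = (relSub F H V).mkQ (Smap Y) := by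
  rw [Submodule.mkQ_apply, Submodule.mkQ_apply, Submodule.Quotient.eq] at hXY ⊢
  have h2 := Smap_rel hcc _ hXY
  rwa [map_sub] at h2

lemma Phi_congr (hdiff : ∀ (h : H) (a b : V),
      h • (a * b)
        = (LinearMap.mul' F V)
            ((TensorProduct.map (TensorProduct.lift (hAct F H V))
                (TensorProduct.lift (hAct F H V)))
              ((TensorProduct.tensorTensorTensorComm F H H V V)
                (Coalgebra.comul h ⊗ₜ[F] (a ⊗ₜ[F] b)))))
    (c : V) {X Y : (H ⊗[F] H) ⊗[F] V}
    (hXY : (relSub F H V).mkQ X = (relSub F H V).mkQ Y) :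
    (relSub F H V).mkQ (Phi F H V c X) = (relSub F H V).mkQ (Phi F H V c Y) := by
  rw [Submodule.mkQ_apply, Submodule.mkQ_apply, Submodule.Quotient.eq] at hXY ⊢
  have h2 := Phi_rel hdiff c _ hXY
  rwa [map_sub] at h2

/-! ### the covering argument -/

lemma cover (p : V → ZMod 2) :
    Submodule.span F {x : V | p x ≠ 1} = ⊤ ∨ Submodule.span F {x : V | p x = 1} = ⊤ := by
  by_contra hc
  push_neg at hc
  obtain ⟨h1, h2⟩ := hc
  have e1 : ∃ u, u ∉ Submodule.span F {x : V | p x ≠ 1} := by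
    by_contra hcon
    push_neg at hcon
    exact h1 (Submodule.eq_top_iff'.mpr hcon)
  have e2 : ∃ w, w ∉ Submodule.span F {x : V | p x = 1} := by
    by_contra hcon
    push_neg at hcon
    exact h2 (Submodule.eq_top_iff'.mpr hcon)
  obtain ⟨u, hu⟩ := e1
  obtain ⟨w, hw⟩ := e2
  have hpu : p u = 1 := by
    by_contra hne
    exact hu (Submodule.subset_span hne)
  have hpw : p w ≠ 1 := by
    intro heq
    exact hw (Submodule.subset_span heq)
  have hu' : u ∈ Submodule.span F {x : V | p x = 1} := Submodule.subset_span hpu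
  have hw' : w ∈ Submodule.span F {x : V | p x ≠ 1} := Submodule.subset_span hpw
  by_cases hc2 : p (u + w) = 1
  · have hm : u + w ∈ Submodule.span F {x : V | p x = 1} := Submodule.subset_span hc2
    have : w ∈ Submodule.span F {x : V | p x = 1} := by
      have h3 := Submodule.sub_mem _ hm hu'
      simpa using h3
    exact hw this
  · have hm : u + w ∈ Submodule.span F {x : V | p x ≠ 1} := Submodule.subset_span hc2
    have : u ∈ Submodule.span F {x : V | p x ≠ 1} := by
      have h3 := Submodule.sub_mem _ hm hw'
      simpa using h3
    exact hu this

end MyAux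
/-- In any Poisson `H`-pseudoalgebra `V` (with parity `p`, supercommutative
product, `H`-bilinear skewsymmetric pseudobracket `β` with values in `(H⊗H) ⊗_H V`
— represented here by representatives in `(H⊗H) ⊗ V` modulo the balancing
submodule `relSub` — satisfying the left Leibniz rule), the right Leibniz rule holds:
`[ab ∗ c] = a[b ∗ c] + (-1)^{p(a)p(b)} b[a ∗ c]`,
where `a[b∗c] := Σᵢ (hᵢ₍₁₎ ⊗ lᵢ) ⊗_H (S(hᵢ₍₂₎) • a) dᵢ` (the map `PhiL`). -/
theorem stmt4
    (hcc : ∀ h : H, (TensorProduct.comm F H H) (Coalgebra.comul h) = Coalgebra.comul h)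
    (hdiff : ∀ (h : H) (a b : V),
      h • (a * b)
        = (LinearMap.mul' F V)
            ((TensorProduct.map (TensorProduct.lift (hAct F H V))
                (TensorProduct.lift (hAct F H V)))
              ((TensorProduct.tensorTensorTensorComm F H H V V)
                (Coalgebra.comul h ⊗ₜ[F] (a ⊗ₜ[F] b)))))
    -- the parity of (homogeneous) elements of the superspace `V`
    (p : V → ZMod 2)
    -- supercommutativity of the product
    (hsc : ∀ a b : V, a * b = ((-1 : F) ^ (p a * p b).val) • (b * a))
    -- the pseudobracket, given by representatives
    (β : V →ₗ[F] V →ₗ[F] (H ⊗[F] H) ⊗[F] V)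
    -- `H`-bilinearity: `[fa ∗ gb] = ((f ⊗ g) ⊗_H 1)[a ∗ b]`
    (hbil : ∀ (f g : H) (a b : V),
      (relSub F H V).mkQ (β (f • a) (g • b))
        = (relSub F H V).mkQ
            ((TensorProduct.map (LinearMap.mulLeft F (f ⊗ₜ[F] g)) LinearMap.id) (β a b)))
    -- skewsymmetry: `[b ∗ a] = -(-1)^{p(a)p(b)} (σ ⊗_H id)[a ∗ b]`
    (hskew : ∀ a b : V,
      (relSub F H V).mkQ (β b a)
        = (relSub F H V).mkQ
            (-(((-1 : F) ^ (p a * p b).val) •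
              (TensorProduct.map (TensorProduct.comm F H H).toLinearMap LinearMap.id)
                (β a b))))
    -- left Leibniz rule: `[a ∗ bc] = [a ∗ b]c + (-1)^{p(b)p(c)} [a ∗ c]b`
    (hleib : ∀ a b c : V,
      (relSub F H V).mkQ (β a (b * c))
        = (relSub F H V).mkQ
            (Phi F H V c (β a b)
              + ((-1 : F) ^ (p b * p c).val) • Phi F H V b (β a c))) :
    -- right Leibniz rule: `[ab ∗ c] = a[b ∗ c] + (-1)^{p(a)p(b)} b[a ∗ c]`
    ∀ a b c : V,
      (relSub F H V).mkQ (β (a * b) c)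
        = (relSub F H V).mkQ
            (PhiL F H V a (β b c)
              + ((-1 : F) ^ (p a * p b).val) • PhiL F H V b (β a c)) := by
  intro a b c
  have hz2 : ∀ t : ZMod 2, t = 0 ∨ t = 1 := by decide
  have hv0 : ((0 : ZMod 2)).val = 0 := rfl
  have hv1 : ((1 : ZMod 2)).val = 1 := rfl
  obtain ⟨s, hs, G1, G2, G3⟩ :
      ∃ s : F, (s = 1 ∨ s = -1)
        ∧ (∀ x y : V, x * y = s • (y * x))
        ∧ (∀ x y : V, (relSub F H V).mkQ (β y x)
            = (-s) • (relSub F H V).mkQ (Smap (β x y)))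
        ∧ (∀ x y z : V, (relSub F H V).mkQ (β x (y * z))
            = (relSub F H V).mkQ (Phi F H V z (β x y))
              + s • (relSub F H V).mkQ (Phi F H V y (β x z))) := by
    have hSdef : ∀ X : (H ⊗[F] H) ⊗[F] V,
        (TensorProduct.map (TensorProduct.comm F H H).toLinearMap
          (LinearMap.id (R := F) (M := V))) X = Smap X := fun _ => rfl
    rcases cover (F := F) p with hE | hO
    · -- even case : s = 1
      refine ⟨1, Or.inl rfl, ?_, ?_, ?_⟩
      · intro x y
        rw [one_smul]
        have hx : x ∈ Submodule.span F {x : V | p x ≠ 1} := by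
          rw [hE]; exact Submodule.mem_top
        induction hx using Submodule.span_induction with
        | mem z hzm =>
          have hzne : p z ≠ 1 := hzm
          have hz0 : p z = 0 := (hz2 (p z)).resolve_right hzne
          have h := hsc z y
          rw [hz0] at h
          simpa [hv0] using h
        | zero => simp
        | add z1 z2 _ _ hh1 hh2 => rw [add_mul, mul_add, hh1, hh2]
        | smul r z _ hh1 => rw [smul_mul_assoc, mul_smul_comm, hh1]
      · intro x y
        have hx : x ∈ Submodule.span F {x : V | p x ≠ 1} := by
          rw [hE]; exact Submodule.mem_top
        induction hx using Submodule.span_induction with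
        | mem z hzm =>
          have hzne : p z ≠ 1 := hzm
          have hz0 : p z = 0 := (hz2 (p z)).resolve_right hzne
          have h := hskew z y
          rw [hz0] at h
          simp only [hSdef] at h
          simpa [hv0, neg_smul] using h
        | zero => simp
        | add z1 z2 _ _ hh1 hh2 =>
          have e1 : β y (z1 + z2) = β y z1 + β y z2 := map_add _ _ _
          have e2 : β (z1 + z2) y = β z1 y + β z2 y := by
            rw [map_add, LinearMap.add_apply]
          rw [e1, map_add, e2, map_add, map_add, hh1, hh2]
          module
        | smul r z _ hh1 =>
          have e1 : β y (r • z) = r • β y z := map_smul _ _ _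
          have e2 : β (r • z) y = r • β z y := by
            rw [map_smul, LinearMap.smul_apply]
          rw [e1, map_smul, e2, map_smul, map_smul, hh1]
          module
      · intro x y z
        have hy : y ∈ Submodule.span F {x : V | p x ≠ 1} := by
          rw [hE]; exact Submodule.mem_top
        induction hy using Submodule.span_induction with
        | mem m hm =>
          have hmne : p m ≠ 1 := hm
          have hm0 : p m = 0 := (hz2 (p m)).resolve_right hmne
          have h := hleib x m z
          rw [hm0] at h
          simpa [hv0, map_add] using h
        | zero => simp [Phi_zero]
        | add m1 m2 _ _ hh1 hh2 =>
          have e1 : β x ((m1 + m2) * z) = β x (m1 * z) + β x (m2 * z) := by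
            rw [add_mul, map_add]
          have e2 : Phi F H V z (β x (m1 + m2))
              = Phi F H V z (β x m1) + Phi F H V z (β x m2) := by
            rw [show β x (m1 + m2) = β x m1 + β x m2 from map_add _ _ _, map_add]
          have e3 : Phi F H V (m1 + m2) (β x z)
              = Phi F H V m1 (β x z) + Phi F H V m2 (β x z) := Phi_add m1 m2 _
          rw [e1, map_add, e2, map_add, e3, map_add, hh1, hh2]
          module
        | smul r m _ hh1 =>
          have e1 : β x ((r • m) * z) = r • β x (m * z) := by
            rw [smul_mul_assoc, map_smul]
          have e2 : Phi F H V z (β x (r • m)) = r • Phi F H V z (β x m) := by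
            rw [show β x (r • m) = r • β x m from map_smul _ _ _, map_smul]
          have e3 : Phi F H V (r • m) (β x z) = r • Phi F H V m (β x z) := Phi_smul r m _
          rw [e1, map_smul, e2, map_smul, e3, map_smul, hh1]
          module
    · -- odd case : s = -1
      refine ⟨-1, Or.inr rfl, ?_, ?_, ?_⟩
      · intro x y
        have step1 : ∀ m : V, p m = 1 → ∀ x : V, x * m = (-1 : F) • (m * x) := by
          intro m hm x
          have hx : x ∈ Submodule.span F {x : V | p x = 1} := by
            rw [hO]; exact Submodule.mem_top
          induction hx using Submodule.span_induction with
          | mem z hzm =>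
            have hz1 : p z = 1 := hzm
            have h := hsc z m
            rw [hz1, hm] at h
            simpa [hv1] using h
          | zero => simp
          | add z1 z2 _ _ hh1 hh2 => rw [add_mul, mul_add, hh1, hh2, smul_add]
          | smul r z _ hh1 =>
            rw [smul_mul_assoc, hh1, mul_smul_comm]
            exact smul_comm _ _ _
        have hy : y ∈ Submodule.span F {x : V | p x = 1} := by
          rw [hO]; exact Submodule.mem_top
        induction hy using Submodule.span_induction with
        | mem m hm => exact step1 m hm x
        | zero => simp
        | add m1 m2 _ _ hh1 hh2 => rw [mul_add, add_mul, hh1, hh2, smul_add]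
        | smul r m _ hh1 =>
          rw [mul_smul_comm, hh1, smul_mul_assoc]
          exact smul_comm _ _ _
      · intro x y
        have step1 : ∀ m : V, p m = 1 → ∀ x : V,
            (relSub F H V).mkQ (β m x) = (relSub F H V).mkQ (Smap (β x m)) := by
          intro m hm x
          have hx : x ∈ Submodule.span F {x : V | p x = 1} := by
            rw [hO]; exact Submodule.mem_top
          induction hx using Submodule.span_induction with
          | mem z hzm =>
            have hz1 : p z = 1 := hzm
            have h := hskew z m
            rw [hz1, hm] at h
            simp only [hSdef] at h
            simpa [hv1] using h
          | zero => simp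
          | add z1 z2 _ _ hh1 hh2 =>
            have e1 : β m (z1 + z2) = β m z1 + β m z2 := map_add _ _ _
            have e2 : β (z1 + z2) m = β z1 m + β z2 m := by
              rw [map_add, LinearMap.add_apply]
            rw [e1, map_add, e2, map_add, map_add, hh1, hh2]
          | smul r z _ hh1 =>
            have e1 : β m (r • z) = r • β m z := map_smul _ _ _
            have e2 : β (r • z) m = r • β z m := by
              rw [map_smul, LinearMap.smul_apply]
            rw [e1, map_smul, e2, map_smul, map_smul, hh1]
        have hy : y ∈ Submodule.span F {x : V | p x = 1} := by
          rw [hO]; exact Submodule.mem_top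
        have goal2 : (relSub F H V).mkQ (β y x) = (relSub F H V).mkQ (Smap (β x y)) := by
          induction hy using Submodule.span_induction with
          | mem m hm => exact step1 m hm x
          | zero => simp
          | add m1 m2 _ _ hh1 hh2 =>
            have e1 : β (m1 + m2) x = β m1 x + β m2 x := by
              rw [map_add, LinearMap.add_apply]
            have e2 : β x (m1 + m2) = β x m1 + β x m2 := map_add _ _ _
            rw [e1, map_add, e2, map_add, map_add, hh1, hh2]
          | smul r m _ hh1 =>
            have e1 : β (r • m) x = r • β m x := by
              rw [map_smul, LinearMap.smul_apply]
            have e2 : β x (r • m) = r • β x m := map_smul _ _ _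
            rw [e1, map_smul, e2, map_smul, map_smul, hh1]
        rw [goal2, neg_neg, one_smul]
      · intro x y z
        have step1 : ∀ m : V, p m = 1 → ∀ n : V, p n = 1 →
            (relSub F H V).mkQ (β x (m * n))
              = (relSub F H V).mkQ (Phi F H V n (β x m))
                + (-1 : F) • (relSub F H V).mkQ (Phi F H V m (β x n)) := by
          intro m hm n hn
          have h := hleib x m n
          rw [hm, hn] at h
          simpa [hv1, map_add] using h
        have step2 : ∀ m : V, p m = 1 → ∀ z : V,
            (relSub F H V).mkQ (β x (m * z))
              = (relSub F H V).mkQ (Phi F H V z (β x m))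
                + (-1 : F) • (relSub F H V).mkQ (Phi F H V m (β x z)) := by
          intro m hm z
          have hzs : z ∈ Submodule.span F {x : V | p x = 1} := by
            rw [hO]; exact Submodule.mem_top
          induction hzs using Submodule.span_induction with
          | mem n hn => exact step1 m hm n hn
          | zero => simp [Phi_zero]
          | add n1 n2 _ _ hh1 hh2 =>
            have e1 : β x (m * (n1 + n2)) = β x (m * n1) + β x (m * n2) := by
              rw [mul_add, map_add]
            have e2 : Phi F H V (n1 + n2) (β x m)
                = Phi F H V n1 (β x m) + Phi F H V n2 (β x m) := Phi_add n1 n2 _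
            have e3 : Phi F H V m (β x (n1 + n2))
                = Phi F H V m (β x n1) + Phi F H V m (β x n2) := by
              rw [show β x (n1 + n2) = β x n1 + β x n2 from map_add _ _ _, map_add]
            rw [e1, map_add, e2, map_add, e3, map_add, hh1, hh2]
            module
          | smul r n _ hh1 =>
            have e1 : β x (m * (r • n)) = r • β x (m * n) := by
              rw [mul_smul_comm, map_smul]
            have e2 : Phi F H V (r • n) (β x m) = r • Phi F H V n (β x m) := Phi_smul r n _
            have e3 : Phi F H V m (β x (r • n)) = r • Phi F H V m (β x n) := by
              rw [show β x (r • n) = r • β x n from map_smul _ _ _, map_smul]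
            rw [e1, map_smul, e2, map_smul, e3, map_smul, hh1]
            module
        have hys : y ∈ Submodule.span F {x : V | p x = 1} := by
          rw [hO]; exact Submodule.mem_top
        induction hys using Submodule.span_induction with
        | mem m hm => exact step2 m hm z
        | zero => simp [Phi_zero]
        | add m1 m2 _ _ hh1 hh2 =>
          have e1 : β x ((m1 + m2) * z) = β x (m1 * z) + β x (m2 * z) := by
            rw [add_mul, map_add]
          have e2 : Phi F H V z (β x (m1 + m2))
              = Phi F H V z (β x m1) + Phi F H V z (β x m2) := by
            rw [show β x (m1 + m2) = β x m1 + β x m2 from map_add _ _ _, map_add]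
          have e3 : Phi F H V (m1 + m2) (β x z)
              = Phi F H V m1 (β x z) + Phi F H V m2 (β x z) := Phi_add m1 m2 _
          rw [e1, map_add, e2, map_add, e3, map_add, hh1, hh2]
          module
        | smul r m _ hh1 =>
          have e1 : β x ((r • m) * z) = r • β x (m * z) := by
            rw [smul_mul_assoc, map_smul]
          have e2 : Phi F H V z (β x (r • m)) = r • Phi F H V z (β x m) := by
            rw [show β x (r • m) = r • β x m from map_smul _ _ _, map_smul]
          have e3 : Phi F H V (r • m) (β x z) = r • Phi F H V m (β x z) := Phi_smul r m _
          rw [e1, map_smul, e2, map_smul, e3, map_smul, hh1]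
          module
  -- the uniform argument
  have hss : s * s = 1 := by rcases hs with h | h <;> rw [h] <;> norm_num
  have hinv : ∀ X Y : (H ⊗[F] H) ⊗[F] V,
      (relSub F H V).mkQ X = (-s) • (relSub F H V).mkQ Y →
      (relSub F H V).mkQ Y = (-s) • (relSub F H V).mkQ X := by
    intro X Y hXY
    rw [hXY, smul_smul, neg_mul_neg, hss, one_smul]
  have hεor : ((-1 : F) ^ (p a * p b).val = s) ∨ ((-1 : F) ^ (p a * p b).val = -s) := by
    rcases hz2 (p a * p b) with h | h <;> rcases hs with h' | h'
    · left; rw [h, hv0, pow_zero, h']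
    · right; rw [h, hv0, pow_zero, h']; norm_num
    · right; rw [h, hv1, pow_one, h']
    · left; rw [h, hv1, pow_one, h']
  have hsm_bc : (relSub F H V).mkQ (Smap (β b c)) = (-s) • (relSub F H V).mkQ (β c b) :=
    hinv _ _ (G2 b c)
  have hsm_ac : (relSub F H V).mkQ (Smap (β a c)) = (-s) • (relSub F H V).mkQ (β c a) :=
    hinv _ _ (G2 a c)
  have key1 : (relSub F H V).mkQ (Smap (Phi F H V a (Smap (β b c))))
      = (-s) • (relSub F H V).mkQ (Smap (Phi F H V a (β c b))) := by
    have h1 : (relSub F H V).mkQ (Phi F H V a (Smap (β b c)))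
        = (relSub F H V).mkQ (Phi F H V a ((-s) • β c b)) := by
      refine Phi_congr hdiff a ?_
      rw [hsm_bc, map_smul]
    have h2 := Smap_congr hcc h1
    rw [h2, map_smul, map_smul, map_smul]
  have key2 : (relSub F H V).mkQ (Smap (Phi F H V b (Smap (β a c))))
      = (-s) • (relSub F H V).mkQ (Smap (Phi F H V b (β c a))) := by
    have h1 : (relSub F H V).mkQ (Phi F H V b (Smap (β a c)))
        = (relSub F H V).mkQ (Phi F H V b ((-s) • β c a)) := by
      refine Phi_congr hdiff b ?_
      rw [hsm_ac, map_smul]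
    have h2 := Smap_congr hcc h1
    rw [h2, map_smul, map_smul, map_smul]
  have hR : (relSub F H V).mkQ (PhiL F H V a (β b c)
        + ((-1 : F) ^ (p a * p b).val) • PhiL F H V b (β a c))
      = (-(1:F)) • (relSub F H V).mkQ (Smap (Phi F H V a (β c b)))
        + (-((-1 : F) ^ (p a * p b).val)) •
            (relSub F H V).mkQ (Smap (Phi F H V b (β c a))) := by
    rw [map_add, map_smul, PhiL_eq s G1 a, PhiL_eq s G1 b, map_smul, map_smul, key1, key2]
    match_scalars
    · linear_combination (-1 : F) * hss
    · linear_combination (-1 : F) * ((-1 : F) ^ (p a * p b).val) * hss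
  rcases hεor with hcase | hcase
  · -- main case
    rw [hR, hcase]
    have h3 : (relSub F H V).mkQ (Smap (Phi F H V a (β c b) + s • Phi F H V b (β c a)))
        = (relSub F H V).mkQ (Smap (β c (b * a))) := by
      refine Smap_congr hcc ?_
      rw [map_add, map_smul]
      exact (G3 c b a).symm
    rw [map_add, map_smul, map_add, map_smul] at h3
    have h4 : (relSub F H V).mkQ (Smap (β c (b * a)))
        = (-s) • (relSub F H V).mkQ (β (b * a) c) := hinv _ _ (G2 c (b * a))
    have h5 : β (b * a) c = s • β (a * b) c := by
      rw [G1 b a, map_smul, LinearMap.smul_apply]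
    have h6 : (relSub F H V).mkQ (Smap (Phi F H V a (β c b)))
        + s • (relSub F H V).mkQ (Smap (Phi F H V b (β c a)))
        = (-1 : F) • (relSub F H V).mkQ (β (a * b) c) := by
      rw [h3, h4, h5, map_smul, smul_smul]
      match_scalars
      linear_combination (-1 : F) * hss
    calc (relSub F H V).mkQ (β (a * b) c)
        = (-1 : F) • ((relSub F H V).mkQ (Smap (Phi F H V a (β c b)))
            + s • (relSub F H V).mkQ (Smap (Phi F H V b (β c a)))) := by
          rw [h6, smul_smul]
          norm_num
      _ = (-(1:F)) • (relSub F H V).mkQ (Smap (Phi F H V a (β c b)))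
          + (-s) • (relSub F H V).mkQ (Smap (Phi F H V b (β c a))) := by
          rw [smul_add, smul_smul]
          norm_num
  · -- degenerate case
    have hsne : s - -s ≠ 0 := by rcases hs with h | h <;> rw [h] <;> norm_num
    have hba : b * a = 0 := by
      have h1 := hsc a b
      rw [hcase] at h1
      have h2 := G1 a b
      have h3 : (s - -s) • (b * a) = 0 := by
        rw [sub_smul, ← h2, ← h1, sub_self]
      exact (smul_eq_zero.mp h3).resolve_left hsne
    have hab : a * b = 0 := by rw [G1 a b, hba, smul_zero]
    have hz1 : ∀ x : V, (relSub F H V).mkQ (Phi F H V a (β x b)) = 0 := by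
      intro x
      have h1 := hleib x a b
      have h2 := G3 x a b
      rw [hab] at h1 h2
      simp only [map_zero, map_add, map_smul] at h1 h2
      rw [hcase] at h1
      have h5 : (s - -s) • (relSub F H V).mkQ (Phi F H V a (β x b)) = 0 := by
        rw [sub_smul]
        calc s • (relSub F H V).mkQ (Phi F H V a (β x b))
              - (-s) • (relSub F H V).mkQ (Phi F H V a (β x b))
            = ((relSub F H V).mkQ (Phi F H V b (β x a))
                + s • (relSub F H V).mkQ (Phi F H V a (β x b)))
              - ((relSub F H V).mkQ (Phi F H V b (β x a))
                + (-s) • (relSub F H V).mkQ (Phi F H V a (β x b))) := by abel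
          _ = 0 - 0 := by rw [← h2, ← h1]
          _ = 0 := by simp
      exact (smul_eq_zero.mp h5).resolve_left hsne
    have hz1' : ∀ x : V, (relSub F H V).mkQ (Phi F H V b (β x a)) = 0 := by
      intro x
      have h1 := hleib x b a
      have h2 := G3 x b a
      rw [hba] at h1 h2
      rw [mul_comm (p b) (p a), hcase] at h1
      simp only [map_zero, map_add, map_smul] at h1 h2
      have h5 : (s - -s) • (relSub F H V).mkQ (Phi F H V b (β x a)) = 0 := by
        rw [sub_smul]
        calc s • (relSub F H V).mkQ (Phi F H V b (β x a))
              - (-s) • (relSub F H V).mkQ (Phi F H V b (β x a))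
            = ((relSub F H V).mkQ (Phi F H V a (β x b))
                + s • (relSub F H V).mkQ (Phi F H V b (β x a)))
              - ((relSub F H V).mkQ (Phi F H V a (β x b))
                + (-s) • (relSub F H V).mkQ (Phi F H V b (β x a))) := by abel
          _ = 0 - 0 := by rw [← h2, ← h1]
          _ = 0 := by simp
      exact (smul_eq_zero.mp h5).resolve_left hsne
    have hA : (relSub F H V).mkQ (Smap (Phi F H V a (β c b))) = 0 := by
      have h0 : (relSub F H V).mkQ (Phi F H V a (β c b))
          = (relSub F H V).mkQ (0 : (H ⊗[F] H) ⊗[F] V) := by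
        simpa using hz1 c
      have h1 := Smap_congr hcc h0
      simpa using h1
    have hB : (relSub F H V).mkQ (Smap (Phi F H V b (β c a))) = 0 := by
      have h0 : (relSub F H V).mkQ (Phi F H V b (β c a))
          = (relSub F H V).mkQ (0 : (H ⊗[F] H) ⊗[F] V) := by
        simpa using hz1' c
      have h1 := Smap_congr hcc h0
      simpa using h1
    rw [hR, hA, hB, hab]
    simp
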